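/- Let A,B be dg-categories and F,G:A→B strictly unital A∞-functors. There is a bijection between closed degree-0 A∞-natural transformations h:F→G and A∞-functors φ:A→Mor(B) satisfying S∘φ=F and T∘φ=G, given by φᵈ=(Fᵈ,Gᵈ,hᵈ) on components (and φ⁰(X)=(F(X),G(X),h⁰_X) on objects). -/

import Mathlib

/-- The data of a differential graded category over a field `k`:
objects, `ℤ`-graded hom spaces, a (degree-additive) composition, a differential
of degree `+1`, and identity morphisms. -/
structure DGData (k : Type) [Field k] : Type 1 where
  Obj : Type
  Hom : Obj → Obj → ℤ → Type
  addgrp : ∀ X Y n, AddCommGroup (Hom X Y n)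
  smod : ∀ X Y n, Module k (Hom X Y n)
  comp : ∀ {X Y Z : Obj} {m n p : ℤ}, m + n = p → Hom Y Z m → Hom X Y n → Hom X Z p
  d : ∀ {X Y : Obj} {n : ℤ}, Hom X Y n → Hom X Y (n + 1)
  one : ∀ X : Obj, Hom X X 0

attribute [instance] DGData.addgrp DGData.smod

namespace DGData

variable {k : Type} [Field k]

/-- Transport a homogeneous morphism along an equality of degrees. -/
def cst (A : DGData k) {X Y : A.Obj} {m n : ℤ} (e : m = n) (f : A.Hom X Y m) :
    A.Hom X Y n := e ▸ f

end DGData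

/-- A differential graded category over a field `k`: dg-data satisfying the axioms of a
category enriched in cochain complexes of `k`-vector spaces. -/
structure DGCat (k : Type) [Field k] extends DGData k where
  d_add : ∀ {X Y : toDGData.Obj} {n : ℤ} (f g : toDGData.Hom X Y n), d (f + g) = d f + d g
  d_smul : ∀ {X Y : toDGData.Obj} {n : ℤ} (a : k) (f : toDGData.Hom X Y n),
    d (a • f) = a • d f
  d_sq : ∀ {X Y : toDGData.Obj} {n : ℤ} (f : toDGData.Hom X Y n), d (d f) = 0
  comp_add_left : ∀ {X Y Z : toDGData.Obj} {m n p : ℤ} (e : m + n = p)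
    (g g' : toDGData.Hom Y Z m) (f : toDGData.Hom X Y n),
    comp e (g + g') f = comp e g f + comp e g' f
  comp_add_right : ∀ {X Y Z : toDGData.Obj} {m n p : ℤ} (e : m + n = p)
    (g : toDGData.Hom Y Z m) (f f' : toDGData.Hom X Y n),
    comp e g (f + f') = comp e g f + comp e g f'
  comp_smul_left : ∀ {X Y Z : toDGData.Obj} {m n p : ℤ} (e : m + n = p) (a : k)
    (g : toDGData.Hom Y Z m) (f : toDGData.Hom X Y n),
    comp e (a • g) f = a • comp e g f
  comp_smul_right : ∀ {X Y Z : toDGData.Obj} {m n p : ℤ} (e : m + n = p) (a : k)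
    (g : toDGData.Hom Y Z m) (f : toDGData.Hom X Y n),
    comp e g (a • f) = a • comp e g f
  assoc : ∀ {W X Y Z : toDGData.Obj} {m n p q r s : ℤ}
    (e1 : m + n = q) (e2 : q + p = s) (e3 : n + p = r) (e4 : m + r = s)
    (h : toDGData.Hom Y Z m) (g : toDGData.Hom X Y n) (f : toDGData.Hom W X p),
    comp e2 (comp e1 h g) f = comp e4 h (comp e3 g f)
  id_comp : ∀ {X Y : toDGData.Obj} {n : ℤ} (f : toDGData.Hom X Y n),
    comp (zero_add n) (one Y) f = f
  comp_id : ∀ {X Y : toDGData.Obj} {n : ℤ} (f : toDGData.Hom X Y n),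
    comp (add_zero n) f (one X) = f
  leibniz : ∀ {X Y Z : toDGData.Obj} {m n p : ℤ} (e : m + n = p)
    (g : toDGData.Hom Y Z m) (f : toDGData.Hom X Y n),
    d (comp e g f) =
      comp (show m + 1 + n = p + 1 by omega) (d g) f +
        ((m.negOnePow : ℤ)) • comp (show m + (n + 1) = p + 1 by omega) g (d f)

namespace DGData

variable {k : Type} [Field k]

/-- An object of the dg-category `Mor(A)` of homotopy coherent morphisms:
a closed degree-zero morphism. -/
structure MorObj (A : DGData k) : Type where
  src : A.Obj
  tgt : A.Obj
  f : A.Hom src tgt 0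
  closed : A.d f = 0

/-- Degree `n` morphisms in `Mor(A)`: triples `(u, v, h)`. -/
abbrev MorHom (A : DGData k) (P Q : MorObj A) (n : ℤ) : Type :=
  A.Hom P.src Q.src n × A.Hom P.tgt Q.tgt n × A.Hom P.src Q.tgt (n - 1)

variable (A : DGData k)

/-- Composition in `Mor(A)`: `(u',v',h') ∘ (u,v,h) = (u'u, v'v, (-1)^n h'u + v'h)`
where `n` is the degree of `(u,v,h)`. -/
def morComp {P Q R : MorObj A} {m n p : ℤ} (e : m + n = p)
    (ψ : MorHom A Q R m) (φ : MorHom A P Q n) : MorHom A P R p :=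
  ⟨A.comp e ψ.1 φ.1, A.comp e ψ.2.1 φ.2.1,
    (n.negOnePow : ℤ) • A.comp (show m - 1 + n = p - 1 by omega) ψ.2.2 φ.1 +
      A.comp (show m + (n - 1) = p - 1 by omega) ψ.2.1 φ.2.2⟩

/-- The differential of `Mor(A)`:
`d(u,v,h) = (du, dv, dh + (-1)^n (f' u - v f))`. -/
def morD {P Q : MorObj A} {n : ℤ} (φ : MorHom A P Q n) : MorHom A P Q (n + 1) :=
  ⟨A.d φ.1, A.d φ.2.1,
    A.cst (show n - 1 + 1 = n + 1 - 1 by omega) (A.d φ.2.2) +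
      (n.negOnePow : ℤ) •
        (A.comp (show (0 : ℤ) + n = n + 1 - 1 by omega) Q.f φ.1 -
          A.comp (show n + (0 : ℤ) = n + 1 - 1 by omega) φ.2.1 P.f)⟩

/-- The identity morphisms of `Mor(A)`. -/
def morOne (P : MorObj A) : MorHom A P P 0 := ⟨A.one P.src, A.one P.tgt, 0⟩

/-- The dg-data of the category `Mor(A)` of homotopy coherent morphisms. -/
def MorData : DGData k where
  Obj := MorObj A
  Hom := MorHom A
  addgrp := fun _ _ _ => inferInstance
  smod := fun _ _ _ => inferInstance
  comp := fun e ψ φ => A.morComp e ψ φ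
  d := fun φ => A.morD φ
  one := A.morOne

/-- Transport of `Mor`-morphisms along an equality of degrees. -/
def morCst {P Q : MorObj A} {m n : ℤ} (e : m = n) (φ : MorHom A P Q m) :
    MorHom A P Q n := e ▸ φ

end DGData

/-- A dg-functor between dg-(data of) categories: commutes with the differential,
preserves composition and identities, and is `k`-linear on hom complexes. -/
structure DGFunctor {k : Type} [Field k] (A B : DGData k) where
  obj : A.Obj → B.Obj
  map : ∀ {X Y : A.Obj} {n : ℤ}, A.Hom X Y n → B.Hom (obj X) (obj Y) n
  map_add : ∀ {X Y : A.Obj} {n : ℤ} (f g : A.Hom X Y n), map (f + g) = map f + map g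
  map_smul : ∀ {X Y : A.Obj} {n : ℤ} (a : k) (f : A.Hom X Y n), map (a • f) = a • map f
  map_d : ∀ {X Y : A.Obj} {n : ℤ} (f : A.Hom X Y n), map (A.d f) = B.d (map f)
  map_comp : ∀ {X Y Z : A.Obj} {m n p : ℤ} (e : m + n = p)
    (g : A.Hom Y Z m) (f : A.Hom X Y n), map (A.comp e g f) = B.comp e (map g) (map f)
  map_one : ∀ X : A.Obj, map (A.one X) = B.one (obj X)

namespace DGData

variable {k : Type} [Field k]

/-- The first `A∞`-composition induced by a dg-structure: `μ¹(f) = (-1)^{|f|} d f`. -/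
def mu1 (A : DGData k) {X Y : A.Obj} {n : ℤ} (f : A.Hom X Y n) : A.Hom X Y (n + 1) :=
  (n.negOnePow : ℤ) • A.d f

/-- The second `A∞`-composition induced by a dg-structure: `μ²(g,f) = (-1)^{|f|} g∘f`. -/
def mu2 (A : DGData k) {X Y Z : A.Obj} {m n p : ℤ} (e : m + n = p)
    (g : A.Hom Y Z m) (f : A.Hom X Y n) : A.Hom X Z p :=
  (n.negOnePow : ℤ) • A.comp e g f

end DGData

namespace DGData

variable {k : Type} [Field k]

/-- A composable chain `(f_d, …, f_1)` of homogeneous morphisms in a dg-category, from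
`X` to `Y`, of total degree `s` and length `d`. -/
inductive Chain (A : DGData k) : A.Obj → A.Obj → ℤ → ℕ → Type
  | single {X Y : A.Obj} {n : ℤ} (f : A.Hom X Y n) : Chain A X Y n 1
  | cons {X Y Z : A.Obj} {n s : ℤ} {d : ℕ} (f : A.Hom Y Z n) (c : Chain A X Y s d) :
      Chain A X Z (n + s) (d + 1)

/-- Transport of chains along an equality of total degrees. -/
def ccast (A : DGData k) {X Y : A.Obj} {s s' : ℤ} {d : ℕ} (e : s = s')
    (c : Chain A X Y s d) : Chain A X Y s' d := e ▸ c

/-- `mods1 A c` is the list of chains obtained from `c` by applying `μ¹` to one entry,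
together with the corresponding sign `(-1)^{✠ₙ}`. -/
def mods1 (A : DGData k) : ∀ {X Y : A.Obj} {s : ℤ} {d : ℕ},
    Chain A X Y s d → List (ℤ × Chain A X Y (s + 1) d)
  | _, _, _, _, .single f => [((1 : ℤ), .single (A.mu1 f))]
  | _, _, _, _, .cons (n := n) (s := s') (d := d') f c =>
      (((s' - (d' : ℤ)).negOnePow : ℤ),
        ccast A (show n + 1 + s' = n + s' + 1 by omega) (.cons (A.mu1 f) c)) ::
      (mods1 A c).map (fun q =>
        (q.1, ccast A (show n + (s' + 1) = n + s' + 1 by omega) (.cons f q.2)))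

/-- `mods2 A c` is the list of chains obtained from `c` by merging two consecutive entries
with `μ²`, together with the corresponding sign `(-1)^{✠ₙ}`. -/
def mods2 (A : DGData k) : ∀ {X Y : A.Obj} {s : ℤ} {d : ℕ},
    Chain A X Y s d → List (ℤ × Chain A X Y s (d - 1))
  | _, _, _, _, .single _ => []
  | _, _, _, _, .cons f (.single g) => [((1 : ℤ), .single (A.mu2 rfl f g))]
  | _, _, _, _, .cons (n := nf) f (.cons (n := ng) (s := sc) (d := dc) g c) =>
      (((sc - (dc : ℤ)).negOnePow : ℤ),
        ccast A (show nf + ng + sc = nf + (ng + sc) by omega)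
          (.cons (A.mu2 rfl f g) c)) ::
      (mods2 A (.cons g c)).map (fun q => (q.1, .cons f q.2))

/-- A way of splitting a chain into a (nonempty) top part and a (nonempty) bottom part. -/
structure Split (A : DGData k) (X Y : A.Obj) (s : ℤ) (d : ℕ) : Type where
  {M : A.Obj} {t s' : ℤ} {e d' : ℕ}
  top : Chain A M Y t e
  bot : Chain A X M s' d'
  hs : t + s' = s
  hd : e + d' = d

/-- The list of all splittings of a chain into two nonempty parts. -/
def splitPairs (A : DGData k) : ∀ {X Y : A.Obj} {s : ℤ} {d : ℕ},
    Chain A X Y s d → List (Split A X Y s d)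
  | _, _, _, _, .single _ => []
  | _, _, _, _, .cons (n := n) (s := s') (d := d') f c =>
      ⟨.single f, c, rfl, by omega⟩ ::
      (splitPairs A c).map (fun σ =>
        ⟨.cons f σ.top, σ.bot, by have := σ.hs; omega, by have := σ.hd; omega⟩)

/-- Whether a homogeneous morphism is an identity morphism. -/
def IsIdElem (A : DGData k) {X Y : A.Obj} {n : ℤ} (f : A.Hom X Y n) : Prop :=
  ∃ _ : X = Y, n = 0 ∧ HEq f (A.one X)

/-- Whether a chain contains an identity morphism among its entries. -/
def HasId (A : DGData k) : ∀ {X Y : A.Obj} {s : ℤ} {d : ℕ}, Chain A X Y s d → Prop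
  | _, _, _, _, .single f => A.IsIdElem f
  | _, _, _, _, .cons f c => A.IsIdElem f ∨ HasId A c

/-- The data of an `A∞`-functor between dg-categories: an assignment on objects together
with maps `F^d` defined on composable chains of length `d ≥ 1`, `F^d` lowering the total
degree by `d - 1`. -/
structure APre (A B : DGData k) : Type where
  obj : A.Obj → B.Obj
  map : ∀ {X Y : A.Obj} {s : ℤ} {d : ℕ} {p : ℤ},
    s + 1 - d = p → Chain A X Y s d → B.Hom (obj X) (obj Y) p

variable {A B : DGData k}

/-- The term `∑_{j=1}^{d-1} μ²_B(F^j(f_d,…,f_{d-j+1}), F^{d-j}(f_{d-j},…,f_1))`. -/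
def splitSum (F : APre A B) {X Y : A.Obj} {s : ℤ} {d : ℕ} {p : ℤ}
    (hp : s + 2 - d = p) (c : Chain A X Y s d) : B.Hom (F.obj X) (F.obj Y) p :=
  ((splitPairs A c).map (fun σ =>
    B.mu2 (show σ.t + 1 - σ.e + (σ.s' + 1 - σ.d') = p by
        have h1 := σ.hs; have h2 := σ.hd; omega)
      (F.map rfl σ.top) (F.map rfl σ.bot))).sum

/-- The term `∑_{n} (-1)^{✠ₙ} F^d(f_d, …, μ¹(f_{n+1}), …, f_1)`. -/
def mods1Sum (F : APre A B) {X Y : A.Obj} {s : ℤ} {d : ℕ} {p : ℤ}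
    (hp : s + 2 - d = p) (c : Chain A X Y s d) : B.Hom (F.obj X) (F.obj Y) p :=
  ((mods1 A c).map (fun q => q.1 • F.map (show s + 1 + 1 - d = p by omega) q.2)).sum

/-- The term `∑_{n} (-1)^{✠ₙ} F^{d-1}(f_d, …, μ²(f_{n+2},f_{n+1}), …, f_1)`. -/
def mods2Sum (F : APre A B) {X Y : A.Obj} {s : ℤ} {d : ℕ} {p : ℤ} (hd : 1 ≤ d)
    (hp : s + 2 - d = p) (c : Chain A X Y s d) : B.Hom (F.obj X) (F.obj Y) p :=
  ((mods2 A c).map (fun q =>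
    q.1 • F.map (show s + 1 - ((d - 1 : ℕ) : ℤ) = p by
      rw [Int.natCast_sub hd]; omega) q.2)).sum

/-- The property of being a (strictly unital) `A∞`-functor between dg-categories:
the `A∞`-functor equations (in the form they take when source and target are dg) and
strict unitality. -/
def IsAInf (F : APre A B) : Prop :=
  (∀ {X Y : A.Obj} {s : ℤ} {d : ℕ} {p : ℤ} (hp : s + 2 - d = p) (hd : 1 ≤ d)
    (c : Chain A X Y s d),
    B.cst (show s + 1 - d + 1 = p by omega) (B.mu1 (F.map rfl c)) + splitSum F hp c =
      mods1Sum F hp c + mods2Sum F hd hp c) ∧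
  (∀ X : A.Obj,
    F.map (show (0 : ℤ) + 1 - (1 : ℕ) = 0 by norm_num) (.single (A.one X)) =
      B.one (F.obj X)) ∧
  (∀ {X Y : A.Obj} {s : ℤ} {d : ℕ} {p : ℤ} (hp : s + 1 - d = p) (c : Chain A X Y s d),
    2 ≤ d → HasId A c → F.map hp c = 0)

end DGData

namespace DGData

variable {k : Type} [Field k]

theorem chain_len_pos (A : DGData k) {X Y : A.Obj} {s : ℤ} {d : ℕ}
    (c : Chain A X Y s d) : 1 ≤ d := by cases c <;> omega

variable {A B : DGData k}

/-- A pre-natural transformation of degree `g` between `A∞`-functors: a family of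
components `h⁰_X` together with higher components `h^d` defined on composable chains. -/
structure PreNat (F G : APre A B) (g : ℤ) : Type where
  h0 : ∀ X : A.Obj, B.Hom (F.obj X) (G.obj X) g
  hmap : ∀ {X Y : A.Obj} {s : ℤ} {d : ℕ} {p : ℤ},
    s + g - d = p → Chain A X Y s d → B.Hom (F.obj X) (G.obj Y) p

namespace PreNat

variable {F G : APre A B} {g : ℤ}

instance : Zero (PreNat F G g) := ⟨⟨fun _ => 0, fun _ _ => 0⟩⟩
instance : Add (PreNat F G g) :=
  ⟨fun a b => ⟨fun X => a.h0 X + b.h0 X, fun e c => a.hmap e c + b.hmap e c⟩⟩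
instance : Neg (PreNat F G g) := ⟨fun a => ⟨fun X => -a.h0 X, fun e c => -a.hmap e c⟩⟩
instance : Sub (PreNat F G g) :=
  ⟨fun a b => ⟨fun X => a.h0 X - b.h0 X, fun e c => a.hmap e c - b.hmap e c⟩⟩

/-- Transport of pre-natural transformations along an equality of degrees. -/
def ncast {g g' : ℤ} (e : g = g') (h : PreNat F G g) : PreNat F G g' := e ▸ h

end PreNat

/-- The differential `μ¹` on pre-natural transformations (Seidel's formula `A^d - B^d`). -/
def delta {F G : APre A B} {g : ℤ} (h : PreNat F G g) : PreNat F G (g + 1) where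
  h0 X := B.mu1 (h.h0 X)
  hmap {X Y s d p} e c :=
    (B.cst (show s + g - d + 1 = p by omega) (B.mu1 (h.hmap rfl c)) +
      B.mu2 (show s + 1 - d + g = p by omega) (G.map rfl c) (h.h0 X) +
      (((s - d) * (g - 1)).negOnePow : ℤ) •
        B.mu2 (show g + (s + 1 - d) = p by omega) (h.h0 Y) (F.map rfl c) +
      ((splitPairs A c).map (fun σ =>
        B.mu2 (show σ.t + 1 - σ.e + (σ.s' + g - σ.d') = p by
            have h1 := σ.hs; have h2 := σ.hd; omega)
          (G.map rfl σ.top) (h.hmap rfl σ.bot))).sum +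
      ((splitPairs A c).map (fun σ =>
        (((σ.s' - σ.d') * (g - 1)).negOnePow : ℤ) •
          B.mu2 (show σ.t + g - σ.e + (σ.s' + 1 - σ.d') = p by
              have h1 := σ.hs; have h2 := σ.hd; omega)
            (h.hmap rfl σ.top) (F.map rfl σ.bot))).sum) -
    ((g - 1).negOnePow : ℤ) •
      (((mods1 A c).map (fun q =>
          q.1 • h.hmap (show s + 1 + g - d = p by omega) q.2)).sum +
        ((mods2 A c).map (fun q =>
          q.1 • h.hmap (show s + g - ((d - 1 : ℕ) : ℤ) = p by
            have := chain_len_pos A c; omega) q.2)).sum)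

/-- The vertical composition of pre-natural transformations. -/
def vcomp {F G H : APre A B} {m n : ℤ} (β : PreNat G H m) (α : PreNat F G n) :
    PreNat F H (m + n) where
  h0 X := B.comp rfl (β.h0 X) (α.h0 X)
  hmap {X Y s d p} e c :=
    B.comp (show m + (s + n - d) = p by omega) (β.h0 Y) (α.hmap rfl c) +
    B.comp (show s + m - d + n = p by omega) (β.hmap rfl c) (α.h0 X) +
    ((splitPairs A c).map (fun σ =>
      B.comp (show σ.t + m - σ.e + (σ.s' + n - σ.d') = p by
          have h1 := σ.hs; have h2 := σ.hd; omega)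
        (β.hmap rfl σ.top) (α.hmap rfl σ.bot))).sum

/-- The identity natural transformation. -/
def idNat (F : APre A B) : PreNat F F 0 := ⟨fun X => B.one (F.obj X), fun _ _ => 0⟩

/-- A pre-natural transformation of degree `0` is closed when `μ¹(h) = 0`. -/
def IsClosedNat {F G : APre A B} (φ : PreNat F G 0) : Prop := delta φ = 0

/-- Two degree-`0` pre-natural transformations are homotopic if they differ by a
`μ¹`-coboundary. -/
def Homotopic {F G : APre A B} (a b : PreNat F G 0) : Prop :=
  ∃ s : PreNat F G (-1),
    a - b = PreNat.ncast (show (-1 : ℤ) + 1 = 0 by omega) (delta s)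

/-- Strict unitality of a pre-natural transformation: its higher components vanish
on chains containing an identity. -/
def IsUnitalNat {F G : APre A B} {g : ℤ} (φ : PreNat F G g) : Prop :=
  ∀ {X Y : A.Obj} {s : ℤ} {d : ℕ} {p : ℤ} (e : s + g - d = p)
    (c : Chain A X Y s d), HasId A c → φ.hmap e c = 0

/-- A closed degree-zero morphism in a dg-category is a homotopy equivalence if it becomes
invertible in `H⁰`. -/
def HtpyEquiv (B : DGData k) {X Y : B.Obj} (f : B.Hom X Y 0) : Prop :=
  ∃ g : B.Hom Y X 0, B.d g = 0 ∧
    (∃ s : B.Hom X X (-1),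
      B.comp (show (0:ℤ) + 0 = 0 by omega) g f - B.one X =
        B.cst (show (-1:ℤ) + 1 = 0 by omega) (B.d s)) ∧
    (∃ t : B.Hom Y Y (-1),
      B.comp (show (0:ℤ) + 0 = 0 by omega) f g - B.one Y =
        B.cst (show (-1:ℤ) + 1 = 0 by omega) (B.d t))

/-- Two `A∞`-functors are isomorphic in `H⁰(RHom(A,B)) = H⁰(Fun_{A∞}(A,B))` when there are
closed degree-zero natural transformations between them which are mutually inverse up to
homotopy. -/
def QIso (F G : APre A B) : Prop :=
  ∃ φ : PreNat F G 0, IsClosedNat φ ∧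
    ∃ ψ : PreNat G F 0, IsClosedNat ψ ∧
      Homotopic (PreNat.ncast (show (0:ℤ) + 0 = 0 by omega) (vcomp ψ φ)) (idNat F) ∧
      Homotopic (PreNat.ncast (show (0:ℤ) + 0 = 0 by omega) (vcomp φ ψ)) (idNat G)

/-- The first component `F¹` of an `A∞`-functor, on degree-0 morphisms. -/
def map1 (F : APre A B) {X Y : A.Obj} (f : A.Hom X Y 0) :
    B.Hom (F.obj X) (F.obj Y) 0 :=
  F.map (show (0:ℤ) + 1 - ((1:ℕ) : ℤ) = 0 by norm_num) (.single f)

/-- A natural transformation `H⁰(F) → H⁰(G)`, given by representatives: a family of closed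
degree-0 components, natural up to coboundary. -/
def NatH0 (F G : APre A B) (bar : ∀ X : A.Obj, B.Hom (F.obj X) (G.obj X) 0) : Prop :=
  (∀ X, B.d (bar X) = 0) ∧
  (∀ {X Y : A.Obj} (f : A.Hom X Y 0), A.d f = 0 →
    ∃ s : B.Hom (F.obj X) (G.obj Y) (-1),
      B.comp (show (0:ℤ) + 0 = 0 by omega) (map1 G f) (bar X) -
          B.comp (show (0:ℤ) + 0 = 0 by omega) (bar Y) (map1 F f) =
        B.cst (show (-1:ℤ) + 1 = 0 by omega) (B.d s))

/-- A natural isomorphism `H⁰(F) ≅ H⁰(G)`, given by representatives. -/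
def NatH0Iso (F G : APre A B) : Prop :=
  ∃ bar : ∀ X : A.Obj, B.Hom (F.obj X) (G.obj X) 0,
    NatH0 F G bar ∧ ∀ X, HtpyEquiv B (bar X)

end DGData

namespace DGData

variable {k : Type} [Field k]

/-- The source dg-functor `S : Mor(B) → B`. -/
def morS (B : DGData k) : DGFunctor (MorData B) B where
  obj P := P.src
  map φ := φ.1
  map_add _ _ := rfl
  map_smul _ _ := rfl
  map_d _ := rfl
  map_comp _ _ _ := rfl
  map_one _ := rfl

/-- The target dg-functor `T : Mor(B) → B`. -/
def morT (B : DGData k) : DGFunctor (MorData B) B where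
  obj P := P.tgt
  map φ := φ.2.1
  map_add _ _ := rfl
  map_smul _ _ := rfl
  map_d _ := rfl
  map_comp _ _ _ := rfl
  map_one _ := rfl

variable {A B C : DGData k}

/-- Post-composition of an `A∞`-functor with a dg-functor. -/
def postcompDG (G : DGFunctor B C) (F : APre A B) : APre A C where
  obj := G.obj ∘ F.obj
  map e c := G.map (F.map e c)

/-- The `A∞`-functor `A → Mor(B)` associated with a closed degree-0 natural
transformation `h : F → G`, given by `φ^d = (F^d, G^d, h^d)`. -/
def natToMor (F G : APre A B) (h : PreNat F G 0) (hcl : IsClosedNat h) :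
    APre A (MorData B) where
  obj X :=
    ⟨F.obj X, G.obj X, h.h0 X, by
      have h1 : (delta h).h0 X = (0 : PreNat F G (0 + 1)).h0 X := by rw [hcl]
      simpa [delta, DGData.mu1, Int.negOnePow_zero] using (h1.trans rfl : (delta h).h0 X = 0)⟩
  map {X Y s d p} e c :=
    (F.map e c, G.map e c, h.hmap (show s + 0 - d = p - 1 by omega) c)

end DGData

namespace DGData
variable {k : Type} [Field k] {A B : DGData k}

attribute [reducible] DGData.postcompDG DGData.morS DGData.morT
/-! ### Cast toolkit -/

theorem cst_rfl (B : DGData k) {X Y : B.Obj} {n : ℤ} (f : B.Hom X Y n) :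
    B.cst rfl f = f := rfl

theorem cst_add (B : DGData k) {X Y : B.Obj} {m n : ℤ} (e : m = n) (f g : B.Hom X Y m) :
    B.cst e (f + g) = B.cst e f + B.cst e g := by subst e; rfl

theorem cst_sub (B : DGData k) {X Y : B.Obj} {m n : ℤ} (e : m = n) (f g : B.Hom X Y m) :
    B.cst e (f - g) = B.cst e f - B.cst e g := by subst e; rfl

theorem cst_zsmul (B : DGData k) {X Y : B.Obj} {m n : ℤ} (e : m = n) (z : ℤ)
    (f : B.Hom X Y m) : B.cst e (z • f) = z • B.cst e f := by subst e; rfl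

theorem cst_zero (B : DGData k) {X Y : B.Obj} {m n : ℤ} (e : m = n) :
    B.cst e (0 : B.Hom X Y m) = 0 := by subst e; rfl

theorem cst_cst (B : DGData k) {X Y : B.Obj} {m n p : ℤ} (e1 : m = n) (e2 : n = p)
    (e3 : m = p) (f : B.Hom X Y m) : B.cst e2 (B.cst e1 f) = B.cst e3 f := by
  subst e1; subst e2; rfl

theorem cst_comp (B : DGData k) {X Y Z : B.Obj} {m n p1 p2 : ℤ} (e1 : m + n = p1)
    (ep : p1 = p2) (e2 : m + n = p2) (g : B.Hom Y Z m) (f : B.Hom X Y n) :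
    B.cst ep (B.comp e1 g f) = B.comp e2 g f := by subst ep; rfl

theorem comp_cst_left (B : DGData k) {X Y Z : B.Obj} {m1 m n p : ℤ} (e1 : m1 = m)
    (e : m + n = p) (e2 : m1 + n = p) (g : B.Hom Y Z m1) (f : B.Hom X Y n) :
    B.comp e (B.cst e1 g) f = B.comp e2 g f := by subst e1; rfl

theorem comp_cst_right (B : DGData k) {X Y Z : B.Obj} {m n1 n p : ℤ} (e1 : n1 = n)
    (e : m + n = p) (e2 : m + n1 = p) (g : B.Hom Y Z m) (f : B.Hom X Y n1) :
    B.comp e g (B.cst e1 f) = B.comp e2 g f := by subst e1; rfl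

theorem cst_d (B : DGData k) {X Y : B.Obj} {m n : ℤ} (e : m = n) (e2 : m + 1 = n + 1)
    (f : B.Hom X Y m) : B.cst e2 (B.d f) = B.d (B.cst e f) := by subst e; rfl

theorem cst_sum (B : DGData k) {ι : Type*} {X Y : B.Obj} {m n : ℤ} (e : m = n)
    (l : List ι) (f : ι → B.Hom X Y m) :
    B.cst e (l.map f).sum = (l.map fun i => B.cst e (f i)).sum := by subst e; rfl

/-! ### Sign lemmas -/

theorem mul_negOnePow_succ {a b : ℤ} (h : a + 1 = b) :
    (a.negOnePow : ℤ) * (b.negOnePow : ℤ) = -1 := by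
  subst h
  rw [Int.negOnePow_succ, Units.val_neg, mul_neg, ← Units.val_mul, Int.units_mul_self]
  rfl

theorem smul_smul_negOnePow_succ {a b : ℤ} (h : a + 1 = b) {M : Type*} [AddCommGroup M]
    (x : M) : (a.negOnePow : ℤ) • (b.negOnePow : ℤ) • x = -x := by
  rw [smul_smul, mul_negOnePow_succ h, neg_one_zsmul]

theorem smul_smul_negOnePow_self (a : ℤ) {M : Type*} [AddCommGroup M]
    (x : M) : (a.negOnePow : ℤ) • (a.negOnePow : ℤ) • x = x := by
  rw [smul_smul, ← Units.val_mul, Int.units_mul_self, Units.val_one, one_smul]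

/-! ### List sum lemmas -/

theorem sum_map_add' {ι M : Type*} [AddCommMonoid M] (l : List ι) (f g : ι → M) :
    (l.map fun i => f i + g i).sum = (l.map f).sum + (l.map g).sum := by
  induction l with
  | nil => simp
  | cons a l ih => simp only [List.map_cons, List.sum_cons, ih]; abel

theorem sum_map_eq_zero {ι M : Type*} [AddCommMonoid M] (l : List ι) (f : ι → M)
    (h : ∀ a ∈ l, f a = 0) : (l.map f).sum = 0 := by
  induction l with
  | nil => simp
  | cons a l ih => simp only [List.map_cons, List.sum_cons, h a (by simp), ih
      (fun a ha => h a (by simp [ha])), add_zero]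

theorem sum_proj1 {ι : Type*} {P Q : (MorData B).Obj} {n : ℤ} (l : List ι)
    (f : ι → (MorData B).Hom P Q n) :
    ((l.map f).sum).1 = (l.map fun i => (f i).1).sum := by
  induction l with
  | nil => rfl
  | cons a l ih => simp only [List.map_cons, List.sum_cons]; exact congrArg _ ih

theorem sum_proj2 {ι : Type*} {P Q : (MorData B).Obj} {n : ℤ} (l : List ι)
    (f : ι → (MorData B).Hom P Q n) :
    ((l.map f).sum).2.1 = (l.map fun i => (f i).2.1).sum := by
  induction l with
  | nil => rfl
  | cons a l ih => simp only [List.map_cons, List.sum_cons]; exact congrArg _ ih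

theorem sum_proj3 {ι : Type*} {P Q : (MorData B).Obj} {n : ℤ} (l : List ι)
    (f : ι → (MorData B).Hom P Q n) :
    ((l.map f).sum).2.2 = (l.map fun i => (f i).2.2).sum := by
  induction l with
  | nil => rfl
  | cons a l ih => simp only [List.map_cons, List.sum_cons]; exact congrArg _ ih

/-! ### Casting for `map` projections -/

theorem map_cast {A B : DGData k} (F : APre A B) {X Y : A.Obj} {s : ℤ} {d : ℕ}
    {p1 p2 r : ℤ} (e1 : s + 1 - d = p1) (e2 : s + 1 - d = p2) (E1 : p1 = r) (E2 : p2 = r)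
    (c : Chain A X Y s d) : B.cst E1 (F.map e1 c) = B.cst E2 (F.map e2 c) := by
  obtain rfl : p1 = p2 := by omega
  rfl

theorem hmap_cast {A B : DGData k} {F G : APre A B} {g : ℤ} (h : PreNat F G g)
    {X Y : A.Obj} {s : ℤ} {d : ℕ} {p1 p2 r : ℤ} (e1 : s + g - d = p1) (e2 : s + g - d = p2)
    (E1 : p1 = r) (E2 : p2 = r) (c : Chain A X Y s d) :
    B.cst E1 (h.hmap e1 c) = B.cst E2 (h.hmap e2 c) := by
  obtain rfl : p1 = p2 := by omega
  rfl

theorem hmap_cast' {A B : DGData k} {F G : APre A B} {g : ℤ} (h : PreNat F G g)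
    {X Y : A.Obj} {s : ℤ} {d : ℕ} {p1 p2 : ℤ} (e1 : s + g - d = p1) (e2 : s + g - d = p2)
    (E1 : p1 = p2) (c : Chain A X Y s d) :
    B.cst E1 (h.hmap e1 c) = h.hmap e2 c := by
  obtain rfl : p1 = p2 := by omega
  rfl

theorem proj3_cast (φ : APre A (MorData B)) {X Y : A.Obj} {s : ℤ} {d : ℕ}
    {p1 p2 r : ℤ} (e1 : s + 1 - d = p1) (e2 : s + 1 - d = p2) (E1 : p1 - 1 = r)
    (E2 : p2 - 1 = r) (c : Chain A X Y s d) :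
    B.cst E1 ((φ.map e1 c).2.2) = B.cst E2 ((φ.map e2 c).2.2) := by
  obtain rfl : p1 = p2 := by omega
  rfl

theorem proj3_cast' (φ : APre A (MorData B)) {X Y : A.Obj} {s : ℤ} {d : ℕ}
    {p1 p2 : ℤ} (e1 : s + 1 - d = p1) (e2 : s + 1 - d = p2) (E1 : p1 - 1 = p2 - 1)
    (c : Chain A X Y s d) :
    B.cst E1 ((φ.map e1 c).2.2) = (φ.map e2 c).2.2 := by
  obtain rfl : p1 = p2 := by omega
  rfl

theorem map_congr {A B : DGData k} (F : APre A B) {X Y : A.Obj} {s : ℤ} {d : ℕ}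
    {p1 p2 : ℤ} (e1 : s + 1 - d = p1) (e2 : s + 1 - d = p2) (E : p1 = p2)
    (c : Chain A X Y s d) : B.cst E (F.map e1 c) = F.map e2 c := by
  obtain rfl : p1 = p2 := by omega
  rfl

/-! ### Projections of `postcompDG` and `MorData` structure -/

theorem postS_obj (φ : APre A (MorData B)) (X : A.Obj) :
    (postcompDG (morS B) φ).obj X = (φ.obj X).src := rfl

theorem postT_obj (φ : APre A (MorData B)) (X : A.Obj) :
    (postcompDG (morT B) φ).obj X = (φ.obj X).tgt := rfl

theorem postS_map (φ : APre A (MorData B)) {X Y : A.Obj} {s : ℤ} {d : ℕ} {p : ℤ}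
    (e : s + 1 - d = p) (c : Chain A X Y s d) :
    (postcompDG (morS B) φ).map e c = (φ.map e c).1 := rfl

theorem postT_map (φ : APre A (MorData B)) {X Y : A.Obj} {s : ℤ} {d : ℕ} {p : ℤ}
    (e : s + 1 - d = p) (c : Chain A X Y s d) :
    (postcompDG (morT B) φ).map e c = (φ.map e c).2.1 := rfl

theorem mcst_proj1 {P Q : (MorData B).Obj} {m n : ℤ} (e : m = n) (x : (MorData B).Hom P Q m) :
    ((MorData B).cst e x).1 = B.cst e x.1 := by subst e; rfl

theorem mcst_proj2 {P Q : (MorData B).Obj} {m n : ℤ} (e : m = n) (x : (MorData B).Hom P Q m) :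
    ((MorData B).cst e x).2.1 = B.cst e x.2.1 := by subst e; rfl

theorem mcst_proj3 {P Q : (MorData B).Obj} {m n : ℤ} (e : m = n) (e' : m - 1 = n - 1)
    (x : (MorData B).Hom P Q m) :
    ((MorData B).cst e x).2.2 = B.cst e' x.2.2 := by subst e; rfl

end DGData
namespace DGData
variable {k : Type} [Field k] {A B : DGData k}

theorem madd_proj1 {P Q : (MorData B).Obj} {n : ℤ} (x y : (MorData B).Hom P Q n) :
    (x + y).1 = x.1 + y.1 := rfl
theorem madd_proj2 {P Q : (MorData B).Obj} {n : ℤ} (x y : (MorData B).Hom P Q n) :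
    (x + y).2.1 = x.2.1 + y.2.1 := rfl
theorem madd_proj3 {P Q : (MorData B).Obj} {n : ℤ} (x y : (MorData B).Hom P Q n) :
    (x + y).2.2 = x.2.2 + y.2.2 := rfl
theorem msmul_proj1 {P Q : (MorData B).Obj} {n : ℤ} (z : ℤ) (x : (MorData B).Hom P Q n) :
    (z • x).1 = z • x.1 := rfl
theorem msmul_proj2 {P Q : (MorData B).Obj} {n : ℤ} (z : ℤ) (x : (MorData B).Hom P Q n) :
    (z • x).2.1 = z • x.2.1 := rfl
theorem msmul_proj3 {P Q : (MorData B).Obj} {n : ℤ} (z : ℤ) (x : (MorData B).Hom P Q n) :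
    (z • x).2.2 = z • x.2.2 := rfl
theorem mzero_proj1 {P Q : (MorData B).Obj} {n : ℤ} : ((0 : (MorData B).Hom P Q n)).1 = 0 := rfl
theorem mzero_proj2 {P Q : (MorData B).Obj} {n : ℤ} : ((0 : (MorData B).Hom P Q n)).2.1 = 0 := rfl
theorem mzero_proj3 {P Q : (MorData B).Obj} {n : ℤ} : ((0 : (MorData B).Hom P Q n)).2.2 = 0 := rfl

theorem md_proj1 {P Q : (MorData B).Obj} {n : ℤ} (x : (MorData B).Hom P Q n) :
    ((MorData B).d x).1 = B.d x.1 := rfl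
theorem md_proj2 {P Q : (MorData B).Obj} {n : ℤ} (x : (MorData B).Hom P Q n) :
    ((MorData B).d x).2.1 = B.d x.2.1 := rfl
theorem md_proj3 {P Q : (MorData B).Obj} {n : ℤ} (x : (MorData B).Hom P Q n) :
    ((MorData B).d x).2.2 =
      B.cst (show n - 1 + 1 = n + 1 - 1 by omega) (B.d x.2.2) +
        (n.negOnePow : ℤ) •
          (B.comp (show (0 : ℤ) + n = n + 1 - 1 by omega) Q.f x.1 -
            B.comp (show n + (0 : ℤ) = n + 1 - 1 by omega) x.2.1 P.f) := rfl

theorem mcomp_proj1 {P Q R : (MorData B).Obj} {m n p : ℤ} (e : m + n = p)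
    (g : (MorData B).Hom Q R m) (f : (MorData B).Hom P Q n) :
    ((MorData B).comp e g f).1 = B.comp e g.1 f.1 := rfl
theorem mcomp_proj2 {P Q R : (MorData B).Obj} {m n p : ℤ} (e : m + n = p)
    (g : (MorData B).Hom Q R m) (f : (MorData B).Hom P Q n) :
    ((MorData B).comp e g f).2.1 = B.comp e g.2.1 f.2.1 := rfl
theorem mcomp_proj3 {P Q R : (MorData B).Obj} {m n p : ℤ} (e : m + n = p)
    (g : (MorData B).Hom Q R m) (f : (MorData B).Hom P Q n) :
    ((MorData B).comp e g f).2.2 =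
      (n.negOnePow : ℤ) • B.comp (show m - 1 + n = p - 1 by omega) g.2.2 f.1 +
        B.comp (show m + (n - 1) = p - 1 by omega) g.2.1 f.2.2 := rfl

theorem mone_proj1 (P : (MorData B).Obj) : ((MorData B).one P).1 = B.one P.src := rfl
theorem mone_proj2 (P : (MorData B).Obj) : ((MorData B).one P).2.1 = B.one P.tgt := rfl
theorem mone_proj3 (P : (MorData B).Obj) : ((MorData B).one P).2.2 = 0 := rfl

theorem mcst_proj1' {P Q : (MorData B).Obj} {m n : ℤ} (e : m = n) (x : (MorData B).Hom P Q m) :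
    ((MorData B).cst e x).1 = B.cst e x.1 := by subst e; rfl
theorem mcst_proj2' {P Q : (MorData B).Obj} {m n : ℤ} (e : m = n) (x : (MorData B).Hom P Q m) :
    ((MorData B).cst e x).2.1 = B.cst e x.2.1 := by subst e; rfl
theorem mcst_proj3' {P Q : (MorData B).Obj} {m n : ℤ} (e : m = n) (x : (MorData B).Hom P Q m) :
    ((MorData B).cst e x).2.2 = B.cst (show m - 1 = n - 1 by omega) x.2.2 := by
  subst e; rfl

theorem cst_cst' (B : DGData k) {X Y : B.Obj} {m n p : ℤ} (e1 : m = n) (e2 : n = p)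
    (f : B.Hom X Y m) : B.cst e2 (B.cst e1 f) = B.cst (e1.trans e2) f := by
  subst e1; subst e2; rfl

theorem cst_comp' (B : DGData k) {X Y Z : B.Obj} {m n p1 p2 : ℤ} (e1 : m + n = p1)
    (ep : p1 = p2) (g : B.Hom Y Z m) (f : B.Hom X Y n) :
    B.cst ep (B.comp e1 g f) = B.comp (e1.trans ep) g f := by subst ep; rfl

theorem d_cst' (B : DGData k) {X Y : B.Obj} {m n : ℤ} (e : m = n) (f : B.Hom X Y m) :
    B.d (B.cst e f) = B.cst (show m + 1 = n + 1 by omega) (B.d f) := by subst e; rfl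

theorem proj3_d_cast (φ : APre A (MorData B)) {X Y : A.Obj} {s : ℤ} {d : ℕ}
    {p1 p2 r : ℤ} (e1 : s + 1 - d = p1) (e2 : s + 1 - d = p2) (E1 : p1 - 1 + 1 = r)
    (E2 : p2 - 1 + 1 = r) (c : Chain A X Y s d) :
    B.cst E1 (B.d ((φ.map e1 c).2.2)) = B.cst E2 (B.d ((φ.map e2 c).2.2)) := by
  obtain rfl : p1 = p2 := by omega
  rfl

end DGData
namespace DGData
variable {k : Type} [Field k] {A B : DGData k}

theorem comp_cst_right' (B : DGData k) {X Y Z : B.Obj} {m n1 n p : ℤ} (e1 : n1 = n)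
    (e : m + n = p) (g : B.Hom Y Z m) (f : B.Hom X Y n1) :
    B.comp e g (B.cst e1 f) = B.comp (show m + n1 = p by omega) g f := by subst e1; rfl

theorem comp_cst_left' (B : DGData k) {X Y Z : B.Obj} {m1 m n p : ℤ} (e1 : m1 = m)
    (e : m + n = p) (g : B.Hom Y Z m1) (f : B.Hom X Y n) :
    B.comp e (B.cst e1 g) f = B.comp (show m1 + n = p by omega) g f := by subst e1; rfl

theorem proj3_collapse (φ : APre A (MorData B)) {X Y : A.Obj} {s : ℤ} {d : ℕ}
    {p1 p2 : ℤ} (e1 : s + 1 - d = p1) (E1 : p1 - 1 = p2 - 1) (c : Chain A X Y s d) :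
    B.cst E1 ((φ.map e1 c).2.2) = (φ.map (show s + 1 - (d : ℤ) = p2 by omega) c).2.2 :=
  proj3_cast' φ e1 _ E1 c

theorem d_proj3_collapse (φ : APre A (MorData B)) {X Y : A.Obj} {s : ℤ} {d : ℕ}
    {p1 r : ℤ} (e1 : s + 1 - d = p1 + 1) (E1 : p1 + 1 - 1 + 1 = r) (c : Chain A X Y s d) :
    B.cst E1 (B.d ((φ.map e1 c).2.2)) =
      B.cst (show s + 1 - (d : ℤ) - 1 + 1 = r by omega) (B.d ((φ.map rfl c).2.2)) :=
  proj3_d_cast φ e1 rfl E1 _ c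

theorem comp_proj3_cast_right (φ : APre A (MorData B)) {X Y : A.Obj}
    {Z : B.Obj} {s : ℤ} {d : ℕ} {m p1 p2 r : ℤ} (e1 : s + 1 - d = p1)
    (e2 : s + 1 - d = p2) (E1 : m + (p1 - 1) = r) (E2 : m + (p2 - 1) = r)
    (g : B.Hom (φ.obj Y).tgt Z m) (c : Chain A X Y s d) :
    B.comp E1 g ((φ.map e1 c).2.2) = B.comp E2 g ((φ.map e2 c).2.2) := by
  obtain rfl : p1 = p2 := by omega
  rfl

theorem comp_proj3_cast_left (φ : APre A (MorData B)) {X Y : A.Obj}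
    {Z : B.Obj} {s : ℤ} {d : ℕ} {n p1 p2 r : ℤ} (e1 : s + 1 - d = p1)
    (e2 : s + 1 - d = p2) (E1 : (p1 - 1) + n = r) (E2 : (p2 - 1) + n = r)
    (g : B.Hom Z (φ.obj X).src n) (c : Chain A X Y s d) :
    B.comp E1 ((φ.map e1 c).2.2) g = B.comp E2 ((φ.map e2 c).2.2) g := by
  obtain rfl : p1 = p2 := by omega
  rfl

theorem comp_proj3_right_collapse (φ : APre A (MorData B)) {X Y : A.Obj}
    {Z : B.Obj} {s : ℤ} {d : ℕ} {m p1 r : ℤ} (e1 : s + 1 - d = p1 + 1)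
    (E : m + (p1 + 1 - 1) = r) (g : B.Hom (φ.obj Y).tgt Z m) (c : Chain A X Y s d) :
    B.comp E g ((φ.map e1 c).2.2) =
      B.comp (show m + (s + 1 - (d : ℤ) - 1) = r by omega) g ((φ.map rfl c).2.2) :=
  comp_proj3_cast_right φ e1 rfl E _ g c

theorem comp_proj3_left_collapse (φ : APre A (MorData B)) {X Y : A.Obj}
    {Z : B.Obj} {s : ℤ} {d : ℕ} {n p1 r : ℤ} (e1 : s + 1 - d = p1 + 1)
    (E : (p1 + 1 - 1) + n = r) (f : B.Hom Z (φ.obj X).src n) (c : Chain A X Y s d) :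
    B.comp E ((φ.map e1 c).2.2) f =
      B.comp (show (s + 1 - (d : ℤ) - 1) + n = r by omega) ((φ.map rfl c).2.2) f :=
  comp_proj3_cast_left φ e1 rfl E _ f c

theorem negOnePow_shift1 (x y : ℤ) :
    ((x + 0 - y).negOnePow : ℤ) = -((x + 1 - y).negOnePow : ℤ) := by
  rw [show x + 1 - y = (x + 0 - y) + 1 by ring, Int.negOnePow_succ, Units.val_neg,
    neg_neg]

theorem smul_shift_cancel (x y : ℤ) {M : Type*} [AddCommGroup M] (v : M) :
    ((x - y).negOnePow : ℤ) • ((x + 1 - y).negOnePow : ℤ) • v = -v :=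
  smul_smul_negOnePow_succ (by ring) v

theorem sum_map_neg' {ι M : Type*} [AddCommGroup M] (l : List ι) (f : ι → M) :
    (l.map fun i => -(f i)).sum = -(l.map f).sum := by
  induction l with
  | nil => simp
  | cons a l ih => simp only [List.map_cons, List.sum_cons, ih]; abel

end DGData
namespace DGData
variable {k : Type} [Field k] {A B : DGData k}

/-- The pre-natural transformation extracted from a functor to `Mor(B)`. -/
def projNat (φ : APre A (MorData B)) :
    PreNat (postcompDG (morS B) φ) (postcompDG (morT B) φ) 0 where
  h0 X := (φ.obj X).f
  hmap {X Y s d p} e c :=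
    B.cst (show p + 1 - 1 = p by omega)
      ((φ.map (show s + 1 - (d : ℤ) = p + 1 by omega) c).2.2)

theorem projNat_h0 (φ : APre A (MorData B)) (X : A.Obj) :
    (projNat φ).h0 X = (φ.obj X).f := rfl

theorem projNat_hmap (φ : APre A (MorData B)) {X Y : A.Obj} {s : ℤ} {d : ℕ} {p : ℤ}
    (e : s + 0 - d = p) (c : Chain A X Y s d) :
    (projNat φ).hmap e c =
      B.cst (show p + 1 - 1 = p by omega)
        ((φ.map (show s + 1 - (d : ℤ) = p + 1 by omega) c).2.2) := rfl

theorem PreNat.ext' {F G : APre A B} {g : ℤ} {u v : PreNat F G g}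
    (hz : ∀ X, u.h0 X = v.h0 X)
    (hm : ∀ {X Y : A.Obj} {s : ℤ} {d : ℕ} {p : ℤ} (e : s + g - d = p)
      (c : Chain A X Y s d), u.hmap e c = v.hmap e c) : u = v := by
  cases u; cases v
  simp only [PreNat.mk.injEq]
  refine ⟨funext hz, ?_⟩
  funext X Y s d p e c
  exact hm e c

theorem zero_h0 {F G : APre A B} {g : ℤ} (X : A.Obj) :
    (0 : PreNat F G g).h0 X = 0 := rfl

theorem zero_hmap {F G : APre A B} {g : ℤ} {X Y : A.Obj} {s : ℤ} {d : ℕ} {p : ℤ}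
    (e : s + g - d = p) (c : Chain A X Y s d) :
    (0 : PreNat F G g).hmap e c = 0 := rfl

example (F G : APre A B) (h : PreNat F G 0) (hcl : IsClosedNat h) :
    postcompDG (morS B) (natToMor F G h hcl) = F := rfl

example (F G : APre A B) (h : PreNat F G 0) (hcl : IsClosedNat h) :
    postcompDG (morT B) (natToMor F G h hcl) = G := rfl

theorem projNat_natToMor (F G : APre A B) (h : PreNat F G 0) (hcl : IsClosedNat h) :
    projNat (natToMor F G h hcl) = h := by
  refine PreNat.ext' (fun X => rfl) (fun {X Y s d p} e c => ?_)
  show B.cst _ ((natToMor F G h hcl).map _ c).2.2 = h.hmap e c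
  exact hmap_cast' h _ e _ c

end DGData
namespace DGData
variable {k : Type} [Field k] {A B : DGData k}

set_option maxHeartbeats 1000000 in
theorem key3 (φ : APre A (MorData B)) {X Y : A.Obj} {s : ℤ} {d : ℕ} {p : ℤ}
    (hp : s + 2 - d = p) (hd : 1 ≤ d) (c : Chain A X Y s d) :
    (delta (projNat φ)).hmap (show s + (0+1) - (d:ℤ) = p - 1 by omega) c
    = (mods1Sum φ hp c + mods2Sum φ hd hp c).2.2
      - ((MorData B).cst (show s + 1 - (d:ℤ) + 1 = p by omega)
          ((MorData B).mu1 (φ.map rfl c)) + splitSum φ hp c).2.2 := by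
  simp only [delta, splitSum, mods1Sum, mods2Sum, mu1, mu2, postS_map, postT_map,
    projNat_h0, projNat_hmap, madd_proj1, madd_proj2, madd_proj3, msmul_proj3,
    md_proj3, mcomp_proj3, mcst_proj3', sum_proj3, d_cst', cst_cst', cst_comp',
    cst_add, cst_zsmul, cst_sub, smul_add, smul_sub, Int.negOnePow_zero, one_smul,
    zero_sub, mul_neg_one, Int.negOnePow_neg, Int.negOnePow_one]
  simp only [Units.val_neg, Units.val_one, neg_smul, one_smul, neg_neg, smul_neg]
  simp only [smul_smul_negOnePow_self, smul_shift_cancel, negOnePow_shift1]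
  simp only [d_proj3_collapse]
  simp only [proj3_collapse]
  simp only [comp_cst_right', comp_cst_left']
  simp only [comp_proj3_right_collapse, comp_proj3_left_collapse]
  simp only [neg_smul, sum_map_neg', sum_map_add']
  abel

end DGData
namespace DGData
variable {k : Type} [Field k] {A B : DGData k}

theorem mext {P Q : (MorData B).Obj} {n : ℤ} {x y : (MorData B).Hom P Q n} (h1 : x.1 = y.1)
    (h2 : x.2.1 = y.2.1) (h3 : x.2.2 = y.2.2) : x = y :=
  Prod.ext h1 (Prod.ext h2 h3)

set_option maxHeartbeats 1000000 in
theorem lhs1 (φ : APre A (MorData B)) {X Y : A.Obj} {s : ℤ} {d : ℕ} {p : ℤ}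
    (hp : s + 2 - d = p) (c : Chain A X Y s d) :
    ((MorData B).cst (show s + 1 - (d:ℤ) + 1 = p by omega)
        ((MorData B).mu1 (φ.map rfl c)) + splitSum φ hp c).1
    = B.cst (show s + 1 - (d:ℤ) + 1 = p by omega)
        (B.mu1 ((postcompDG (morS B) φ).map rfl c))
        + splitSum (postcompDG (morS B) φ) hp c := by
  simp only [splitSum, mu1, mu2, madd_proj1, msmul_proj1, mcst_proj1', md_proj1,
    mcomp_proj1, sum_proj1, postS_map]

set_option maxHeartbeats 1000000 in
theorem rhs1 (φ : APre A (MorData B)) {X Y : A.Obj} {s : ℤ} {d : ℕ} {p : ℤ}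
    (hp : s + 2 - d = p) (hd : 1 ≤ d) (c : Chain A X Y s d) :
    (mods1Sum φ hp c + mods2Sum φ hd hp c).1
    = mods1Sum (postcompDG (morS B) φ) hp c
        + mods2Sum (postcompDG (morS B) φ) hd hp c := by
  simp only [mods1Sum, mods2Sum, madd_proj1, msmul_proj1, sum_proj1, postS_map]

set_option maxHeartbeats 1000000 in
theorem lhs2 (φ : APre A (MorData B)) {X Y : A.Obj} {s : ℤ} {d : ℕ} {p : ℤ}
    (hp : s + 2 - d = p) (c : Chain A X Y s d) :
    ((MorData B).cst (show s + 1 - (d:ℤ) + 1 = p by omega)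
        ((MorData B).mu1 (φ.map rfl c)) + splitSum φ hp c).2.1
    = B.cst (show s + 1 - (d:ℤ) + 1 = p by omega)
        (B.mu1 ((postcompDG (morT B) φ).map rfl c))
        + splitSum (postcompDG (morT B) φ) hp c := by
  simp only [splitSum, mu1, mu2, madd_proj2, msmul_proj2, mcst_proj2', md_proj2,
    mcomp_proj2, sum_proj2, postT_map]

set_option maxHeartbeats 1000000 in
theorem rhs2 (φ : APre A (MorData B)) {X Y : A.Obj} {s : ℤ} {d : ℕ} {p : ℤ}
    (hp : s + 2 - d = p) (hd : 1 ≤ d) (c : Chain A X Y s d) :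
    (mods1Sum φ hp c + mods2Sum φ hd hp c).2.1
    = mods1Sum (postcompDG (morT B) φ) hp c
        + mods2Sum (postcompDG (morT B) φ) hd hp c := by
  simp only [mods1Sum, mods2Sum, madd_proj2, msmul_proj2, sum_proj2, postT_map]

end DGData
namespace DGData
variable {k : Type} [Field k] {A B : DGData k}

theorem closed_projNat (φ : APre A (MorData B)) (hAI : IsAInf φ) :
    IsClosedNat (projNat φ) := by
  refine PreNat.ext' (fun X => ?_) (fun {X Y s d p} e c => ?_)
  · show B.mu1 ((φ.obj X).f) = 0
    show ((0:ℤ).negOnePow : ℤ) • B.d (φ.obj X).f = 0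
    rw [(φ.obj X).closed, smul_zero]
  · show (delta (projNat φ)).hmap e c = 0
    have h1 := hAI.1 (show s + 2 - (d:ℤ) = p + 1 by omega) (chain_len_pos A c) c
    have h2 := congrArg Prod.snd (congrArg Prod.snd h1)
    have h3 := key3 φ (show s + 2 - (d:ℤ) = p + 1 by omega) (chain_len_pos A c) c
    rw [← hmap_cast' (delta (projNat φ)) (show s + (0+1) - (d:ℤ) = p + 1 - 1 by omega) e
      (show p + 1 - 1 = p by omega) c, h3, h2, sub_self, cst_zero]

theorem unital_projNat (φ : APre A (MorData B)) (hAI : IsAInf φ) :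
    IsUnitalNat (projNat φ) := by
  intro X Y s d p e c hid
  cases c with
  | single f =>
    obtain ⟨h1, h2, h3⟩ := hid
    subst h1; subst h2
    have h4 := eq_of_heq h3; subst h4
    rw [projNat_hmap]
    rw [proj3_cast φ (show (0:ℤ) + 1 - (1:ℕ) = p + 1 by omega)
      (show (0:ℤ) + 1 - (1:ℕ) = 0 by norm_num) (show p + 1 - 1 = p by omega)
      (show (0:ℤ) - 1 = p by omega) (Chain.single (A.one X)), hAI.2.1 X, mone_proj3,
      cst_zero]
  | cons f c' =>
    rw [projNat_hmap, hAI.2.2 _ (Chain.cons f c')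
      (by have := chain_len_pos A c'; omega) hid, mzero_proj3, cst_zero]

theorem natToMor_isAInf (F G : APre A B) (hF : IsAInf F) (hG : IsAInf G)
    (h : PreNat F G 0) (hcl : IsClosedNat h) (hun : IsUnitalNat h) :
    IsAInf (natToMor F G h hcl) := by
  refine ⟨fun {X Y s d p} hp hd c => ?_, fun X => ?_,
    fun {X Y s d p} e c h2 hid => ?_⟩
  · refine mext ?_ ?_ ?_
    · exact (lhs1 (natToMor F G h hcl) hp c).trans
        ((hF.1 hp hd c).trans (rhs1 (natToMor F G h hcl) hp hd c).symm)
    · exact (lhs2 (natToMor F G h hcl) hp c).trans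
        ((hG.1 hp hd c).trans (rhs2 (natToMor F G h hcl) hp hd c).symm)
    · have h3 := key3 (natToMor F G h hcl) hp hd c
      have h4 : projNat (natToMor F G h hcl) = h := projNat_natToMor F G h hcl
      rw [h4] at h3
      have h5 : (delta h).hmap (show s + (0+1) - (d:ℤ) = p - 1 by omega) c = 0 := by
        rw [hcl]; rfl
      erw [h5] at h3
      exact (sub_eq_zero.mp h3.symm).symm
  · refine mext ?_ ?_ ?_
    · exact hF.2.1 X
    · exact hG.2.1 X
    · exact hun _ (Chain.single (A.one X)) ⟨rfl, rfl, HEq.rfl⟩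
  · refine mext ?_ ?_ ?_
    · exact hF.2.2 e c h2 hid
    · exact hG.2.2 e c h2 hid
    · exact hun _ c hid

theorem natToMor_projNat_eq (φ : APre A (MorData B)) (hcl : IsClosedNat (projNat φ)) :
    natToMor _ _ (projNat φ) hcl = φ := by
  obtain ⟨fo, fm⟩ := φ
  show APre.mk _ _ = _
  congr 1
  funext X Y s d p e c
  refine mext rfl rfl ?_
  exact proj3_cast' ⟨fo, fm⟩ _ e _ c

end DGData

open DGData in
/-- For strictly unital `A∞`-functors `F, G : A → B` between
dg-categories, the assignment `h ↦ φ`, `φ^d = (F^d, G^d, h^d)`, is a bijection between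
closed degree-0 (strictly unital) `A∞`-natural transformations `h : F → G` and
(strictly unital) `A∞`-functors `φ : A → Mor(B)` with `S∘φ = F` and `T∘φ = G`. -/
theorem nat_trans_as_functors_to_mor {k : Type} [Field k] (A B : DGCat k)
    (F G : APre A.toDGData B.toDGData) (hF : IsAInf F) (hG : IsAInf G) :
    Function.Injective
      (fun h : {h : PreNat F G 0 // IsClosedNat h ∧ IsUnitalNat h} =>
        natToMor F G h.1 h.2.1) ∧
    Set.range
        (fun h : {h : PreNat F G 0 // IsClosedNat h ∧ IsUnitalNat h} =>
          natToMor F G h.1 h.2.1) =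
      {φ : APre A.toDGData (MorData B.toDGData) |
        IsAInf φ ∧ postcompDG (morS B.toDGData) φ = F ∧
          postcompDG (morT B.toDGData) φ = G} := by
  constructor
  · intro h1 h2 heq
    apply Subtype.ext
    have e1 : projNat (natToMor F G h1.1 h1.2.1) = projNat (natToMor F G h2.1 h2.2.1) :=
      eq_of_heq (congr_arg_heq (fun ψ => projNat ψ) heq)
    exact (projNat_natToMor _ _ h1.1 h1.2.1).symm.trans
      (e1.trans (projNat_natToMor _ _ h2.1 h2.2.1))
  · ext φ
    simp only [Set.mem_range, Set.mem_setOf_eq]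
    constructor
    · rintro ⟨⟨h, hcl, hun⟩, rfl⟩
      exact ⟨natToMor_isAInf _ _ hF hG h hcl hun, rfl, rfl⟩
    · rintro ⟨hAI, hS, hT⟩
      subst hS; subst hT
      exact ⟨⟨projNat φ, closed_projNat φ hAI, unital_projNat φ hAI⟩,
        natToMor_projNat_eq φ _⟩
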